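/- arXiv:1608.04422 — 5 statements merged into one kernel-verified Lean document; each statement's English description precedes it below -/
import Mathlib

section
/- Let L be a real m×n matrix, b ∈ ℝ^m, M a real k×n matrix, and d ∈ ℝ^k. Suppose the system of inequalities L x ≤ b has a solution. Then every x ∈ ℝ^n satisfying L x ≤ b also satisfies M x ≤ d if and only if there exists a real k×m matrix G with all entries nonnegative such that G L = M and G b ≤ d (all inequalities between vectors are entrywise). -/
open scoped InnerProductSpace

lemma conic_caratheodory {V : Type*} [AddCommGroup V] [Module ℝ V] {N : ℕ}
    (v : Fin N → V) (K : ℕ) :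
    ∀ (y : Fin N → ℝ), (Finset.univ.filter (fun i => y i ≠ 0)).card ≤ K →
      (∀ i, 0 ≤ y i) →
      ∃ z : Fin N → ℝ, (∀ i, 0 ≤ z i) ∧ (∑ i, z i • v i) = (∑ i, y i • v i) ∧
        LinearIndependent ℝ (fun i : {i // z i ≠ 0} => v i) := by
  classical
  induction K with
  | zero =>
    intro y hcard _
    have hy : ∀ i, y i = 0 := by
      intro i
      by_contra hi
      have : i ∈ Finset.univ.filter (fun i => y i ≠ 0) := by simp [hi]
      have := Finset.card_pos.mpr ⟨i, this⟩
      omega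
    refine ⟨y, fun i => (hy i).ge, rfl, ?_⟩
    have : IsEmpty {i // y i ≠ 0} := ⟨fun ⟨i, hi⟩ => hi (hy i)⟩
    exact linearIndependent_empty_type
  | succ K ih =>
    intro y hcard hy
    by_cases hli : LinearIndependent ℝ (fun i : {i // y i ≠ 0} => v i)
    · exact ⟨y, hy, rfl, hli⟩
    · obtain ⟨g, hg0, i₁, hgi₁⟩ := Fintype.not_linearIndependent_iff.mp hli
      -- extend g to all of Fin N
      set c : Fin N → ℝ := fun i => if h : y i ≠ 0 then g ⟨i, h⟩ else 0 with hc
      have hcsum : ∑ i, c i • v i = 0 := by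
        have h1 : ∑ i, c i • v i = ∑ i ∈ Finset.univ.filter (fun i => y i ≠ 0), c i • v i := by
          refine (Finset.sum_filter_of_ne ?_).symm
          intro i _ hne
          by_contra h
          exact hne (by simp [hc, h])
        have h2 : ∑ i ∈ Finset.univ.filter (fun i => y i ≠ 0), c i • v i
            = ∑ i : {i // y i ≠ 0}, c (↑i) • v (↑i) :=
          Finset.sum_subtype _ (by intro i; simp) _
        rw [h1, h2, ← hg0]
        apply Finset.sum_congr rfl
        rintro ⟨i, hi⟩ _
        simp [hc, hi]
      have hcsupp : ∀ i, y i = 0 → c i = 0 := by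
        intro i hi; simp [hc, hi]
      have hci₁ : c i₁ ≠ 0 := by
        obtain ⟨i₁v, hi₁⟩ := i₁
        simpa [hc, hi₁] using hgi₁
      -- WLOG some positive coefficient
      obtain ⟨c₂, hc₂sum, hc₂supp, i₂, hc₂pos⟩ :
          ∃ c₂ : Fin N → ℝ, (∑ i, c₂ i • v i = 0) ∧ (∀ i, y i = 0 → c₂ i = 0) ∧
            ∃ i₂, 0 < c₂ i₂ := by
        rcases lt_or_gt_of_ne hci₁ with hneg | hpos
        · refine ⟨-c, ?_, fun i hi => by simp [hcsupp i hi], i₁, by simpa using hneg⟩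
          simp only [Pi.neg_apply, neg_smul, Finset.sum_neg_distrib, hcsum, neg_zero]
        · exact ⟨c, hcsum, hcsupp, i₁, hpos⟩
      -- minimum ratio
      have hTne : (Finset.univ.filter (fun i => 0 < c₂ i)).Nonempty :=
        ⟨i₂, by simp [hc₂pos]⟩
      obtain ⟨i₀, hi₀T, hi₀min⟩ := Finset.exists_min_image _ (fun i => y i / c₂ i) hTne
      rw [Finset.mem_filter] at hi₀T
      have hc₂i₀ : 0 < c₂ i₀ := hi₀T.2
      set lam : ℝ := y i₀ / c₂ i₀ with hlam
      have hlam0 : 0 ≤ lam := div_nonneg (hy i₀) hc₂i₀.le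
      set z : Fin N → ℝ := fun i => y i - lam * c₂ i with hz
      have hz0 : ∀ i, 0 ≤ z i := by
        intro i
        rcases le_or_gt (c₂ i) 0 with hle | hpos
        · have : lam * c₂ i ≤ 0 := mul_nonpos_of_nonneg_of_nonpos hlam0 hle
          simp only [hz]; linarith [hy i]
        · have := hi₀min i (by simp [hpos])
          rw [hlam, div_le_div_iff₀ hc₂i₀ hpos] at this
          simp only [hz, hlam]
          rw [sub_nonneg, div_mul_eq_mul_div, div_le_iff₀ hc₂i₀]
          linarith
      have hzi₀ : z i₀ = 0 := by
        simp only [hz, hlam]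
        field_simp
        ring
      have hzsum : ∑ i, z i • v i = ∑ i, y i • v i := by
        simp only [hz, sub_smul, Finset.sum_sub_distrib, mul_smul, ← Finset.smul_sum,
          hc₂sum, smul_zero, sub_zero]
      have hyi₀ : y i₀ ≠ 0 := fun h => absurd (hc₂supp i₀ h) hc₂i₀.ne'
      have hsub : (Finset.univ.filter (fun i => z i ≠ 0)) ⊆
          (Finset.univ.filter (fun i => y i ≠ 0)).erase i₀ := by
        intro i hi
        rw [Finset.mem_filter] at hi
        rw [Finset.mem_erase, Finset.mem_filter]
        refine ⟨fun h => hi.2 (h ▸ hzi₀), Finset.mem_univ i, fun h => ?_⟩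
        apply hi.2
        simp [hz, h, hc₂supp i h]
      have hcard' : (Finset.univ.filter (fun i => z i ≠ 0)).card ≤ K := by
        have h1 := Finset.card_le_card hsub
        have h2 : i₀ ∈ Finset.univ.filter (fun i => y i ≠ 0) := by simp [hyi₀]
        rw [Finset.card_erase_of_mem h2] at h1
        omega
      obtain ⟨z', hz'0, hz'sum, hz'li⟩ := ih z hcard' hz0
      exact ⟨z', hz'0, hz'sum.trans hzsum, hz'li⟩

lemma cone_isClosed {p N : ℕ} (v : Fin N → EuclideanSpace ℝ (Fin p)) :
    IsClosed {x : EuclideanSpace ℝ (Fin p) |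
      ∃ y : Fin N → ℝ, (∀ i, 0 ≤ y i) ∧ ∑ i, y i • v i = x} := by
  classical
  -- the linear combination map from coefficients supported on `t`
  set f : (t : Finset (Fin N)) → ((↥t → ℝ) →ₗ[ℝ] EuclideanSpace ℝ (Fin p)) :=
    fun t => Fintype.linearCombination ℝ (fun i : ↥t => v ↑i) with hf
  set D : Finset (Fin N) → Set (EuclideanSpace ℝ (Fin p)) := fun t =>
    if LinearIndependent ℝ (fun i : ↥t => v ↑i)
      then (f t) '' {y : ↥t → ℝ | ∀ i, 0 ≤ y i} else ∅ with hD
  have hDclosed : ∀ t, IsClosed (D t) := by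
    intro t
    simp only [hD]
    split_ifs with hli
    · have hker : LinearMap.ker (f t) = ⊥ := by
        rw [LinearMap.ker_eq_bot']
        intro g hg
        rw [hf] at hg
        simp only [Fintype.linearCombination_apply] at hg
        funext i
        exact Fintype.linearIndependent_iff.mp hli g hg i
      have hemb := LinearMap.isClosedEmbedding_of_injective (𝕜 := ℝ) hker
      apply hemb.isClosedMap
      have : {y : ↥t → ℝ | ∀ i, 0 ≤ y i} = ⋂ i, {y : ↥t → ℝ | 0 ≤ y i} := by
        ext y; simp [Set.mem_iInter]
      rw [this]
      exact isClosed_iInter fun i => isClosed_Ici.preimage (continuous_apply i)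
    · exact isClosed_empty
  have hset : {x : EuclideanSpace ℝ (Fin p) |
      ∃ y : Fin N → ℝ, (∀ i, 0 ≤ y i) ∧ ∑ i, y i • v i = x} = ⋃ t, D t := by
    ext x
    constructor
    · rintro ⟨y, hy0, rfl⟩
      obtain ⟨z, hz0, hzsum, hzli⟩ := conic_caratheodory v
        (Finset.univ.filter (fun i => y i ≠ 0)).card y le_rfl hy0
      set t : Finset (Fin N) := Finset.univ.filter (fun i => z i ≠ 0) with ht
      have hli : LinearIndependent ℝ (fun i : ↥t => v ↑i) := by
        have key : ∀ i : ↥t, z (↑i) ≠ 0 := fun i => (Finset.mem_filter.mp i.2).2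
        let e : ↥t → {i // z i ≠ 0} := fun i => ⟨↑i, key i⟩
        have he : Function.Injective e := by
          intro a b hab
          have h2 : (e a).1 = (e b).1 := congrArg Subtype.val hab
          exact Subtype.ext h2
        exact hzli.comp e he
      refine Set.mem_iUnion.mpr ⟨t, ?_⟩
      simp only [hD, hli, if_true]
      refine ⟨fun i => z ↑i, fun i => hz0 _, ?_⟩
      rw [hf]
      simp only [Fintype.linearCombination_apply]
      have hstep1 : (∑ i : ↥t, z ↑i • v ↑i) = ∑ i ∈ t, z i • v i :=
        (Finset.sum_subtype (p := fun i => i ∈ t) t (fun i => Iff.rfl)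
          (fun i => z i • v i)).symm
      have hstep2 : ∑ i ∈ t, z i • v i = ∑ i, z i • v i := by
        apply Finset.sum_subset t.subset_univ
        intro i _ hit
        have hzi : z i = 0 := by
          by_contra h; exact hit (by simp [ht, h])
        simp [hzi]
      rw [hstep1, hstep2, hzsum]
    · rintro hx
      obtain ⟨t, hxt⟩ := Set.mem_iUnion.mp hx
      simp only [hD] at hxt
      split_ifs at hxt with hli
      · obtain ⟨y, hy0, rfl⟩ := hxt
        refine ⟨fun i => if h : i ∈ t then y ⟨i, h⟩ else 0, ?_, ?_⟩
        · intro i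
          dsimp only
          split_ifs with h
          · exact hy0 _
          · exact le_refl 0
        · rw [hf]
          simp only [Fintype.linearCombination_apply]
          have hstep2 : (∑ i, (if h : i ∈ t then y ⟨i, h⟩ else 0) • v i)
              = ∑ i ∈ t, (if h : i ∈ t then y ⟨i, h⟩ else 0) • v i := by
            refine (Finset.sum_subset t.subset_univ ?_).symm
            intro i _ hit
            simp [hit]
          have hstep1 : (∑ i ∈ t, (if h : i ∈ t then y ⟨i, h⟩ else 0) • v i)
              = ∑ i : ↥t, (if h : (i : Fin N) ∈ t then y ⟨i, h⟩ else 0) • v ↑i :=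
            Finset.sum_subtype (p := fun i => i ∈ t) t (fun i => Iff.rfl)
              (fun i => (if h : i ∈ t then y ⟨i, h⟩ else 0) • v i)
          rw [hstep2, hstep1]
          apply Finset.sum_congr rfl
          rintro ⟨i, hi⟩ _
          simp [hi]
      · exact absurd hxt (Set.notMem_empty x)
  rw [hset]
  exact isClosed_iUnion_of_finite hDclosed

lemma farkas_cone {p N : ℕ} (v : Fin N → EuclideanSpace ℝ (Fin p))
    (c : EuclideanSpace ℝ (Fin p))
    (h : ∀ x, (∀ i, 0 ≤ ⟪v i, x⟫_ℝ) → 0 ≤ ⟪c, x⟫_ℝ) :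
    ∃ y : Fin N → ℝ, (∀ i, 0 ≤ y i) ∧ ∑ i, y i • v i = c := by
  classical
  by_contra hc
  set S : Set (EuclideanSpace ℝ (Fin p)) :=
    {x | ∃ y : Fin N → ℝ, (∀ i, 0 ≤ y i) ∧ ∑ i, y i • v i = x} with hS
  set K : ConvexCone ℝ (EuclideanSpace ℝ (Fin p)) :=
    { carrier := S
      smul_mem' := by
        rintro a ha x ⟨y, hy0, rfl⟩
        exact ⟨a • y, fun i => mul_nonneg ha.le (hy0 i), by
          simp [Finset.smul_sum, mul_smul]⟩
      add_mem' := by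
        rintro x ⟨y, hy0, rfl⟩ x' ⟨y', hy'0, rfl⟩
        exact ⟨y + y', fun i => add_nonneg (hy0 i) (hy'0 i), by
          simp [add_smul, Finset.sum_add_distrib]⟩ } with hK
  have hne : (K : Set (EuclideanSpace ℝ (Fin p))).Nonempty :=
    ⟨0, ⟨0, fun i => le_refl 0, by simp⟩⟩
  have hcl : IsClosed (K : Set (EuclideanSpace ℝ (Fin p))) := cone_isClosed v
  have hcK : c ∉ K := by
    intro hmem
    obtain ⟨y, hy0, hy⟩ := hmem
    exact hc ⟨y, hy0, hy⟩
  have h0K : (0 : EuclideanSpace ℝ (Fin p)) ∈ K := ⟨0, fun i => le_refl 0, by simp⟩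
  obtain ⟨w, hw1, hw2⟩ :=
    ProperCone.hyperplane_separation' (ClosedSubmodule.mk (K.toPointedCone h0K)
      (by exact hcl) : ProperCone ℝ (EuclideanSpace ℝ (Fin p))) (x₀ := c) (by exact hcK)
  have hvw : ∀ i, 0 ≤ ⟪v i, w⟫_ℝ := by
    intro i
    apply hw1
    refine ⟨fun i' => if i' = i then 1 else 0, fun i' => by positivity, ?_⟩
    rw [Finset.sum_eq_single i]
    · simp
    · intro i' _ hne'; simp [hne']
    · simp
  have := h w hvw
  rw [real_inner_comm] at this
  linarith [real_inner_comm c w]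

lemma euclid_inner {p : ℕ} (x y : EuclideanSpace ℝ (Fin p)) :
    ⟪x, y⟫_ℝ = ∑ i, x i * y i := by
  simp [PiLp.inner_apply, RCLike.inner_apply, conj_trivial, mul_comm]

lemma euclid_sum_apply {p N : ℕ} (y : Fin N → ℝ) (v : Fin N → EuclideanSpace ℝ (Fin p))
    (j : Fin p) : (∑ i, y i • v i) j = ∑ i, y i * v i j := by
  classical
  rw [show ((∑ i, y i • v i) j) = (∑ i ∈ Finset.univ, y i • v i) j from rfl]
  induction (Finset.univ : Finset (Fin N)) using Finset.induction with
  | empty => rfl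
  | insert a s h ih => simp_all [Finset.sum_insert h, PiLp.add_apply, PiLp.smul_apply]

lemma farkas_affine {m n : ℕ} (L : Matrix (Fin m) (Fin n) ℝ) (b : Fin m → ℝ)
    (hfeas : ∃ x : Fin n → ℝ, L.mulVec x ≤ b) (c : Fin n → ℝ) (δ : ℝ)
    (h : ∀ x : Fin n → ℝ, L.mulVec x ≤ b → ∑ j, c j * x j ≤ δ) :
    ∃ y : Fin m → ℝ, (∀ i, 0 ≤ y i) ∧ (∀ j, ∑ i, y i * L i j = c j) ∧
      ∑ i, y i * b i ≤ δ := by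
  classical
  set v : Fin (m + 1) → EuclideanSpace ℝ (Fin (n + 1)) :=
    Fin.snoc (fun i => WithLp.toLp 2 (Fin.snoc (L i) (b i) : Fin (n + 1) → ℝ))
      (WithLp.toLp 2 (Fin.snoc (0 : Fin n → ℝ) 1 : Fin (n + 1) → ℝ)) with hv
  set cv : EuclideanSpace ℝ (Fin (n + 1)) := WithLp.toLp 2 (Fin.snoc c δ : Fin (n + 1) → ℝ) with hcv
  have key : ∀ x : EuclideanSpace ℝ (Fin (n + 1)),
      (∀ i, 0 ≤ ⟪v i, x⟫_ℝ) → 0 ≤ ⟪cv, x⟫_ℝ := by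
    intro x hx
    set xs : Fin n → ℝ := fun j => x j.castSucc with hxs
    set t : ℝ := x (Fin.last n) with htdef
    have hvi : ∀ i : Fin m, 0 ≤ (∑ j, L i j * xs j) + b i * t := by
      intro i
      have := hx i.castSucc
      rw [euclid_inner] at this
      simpa [hv, Fin.sum_univ_castSucc, Fin.snoc_castSucc, Fin.snoc_last] using this
    have ht : 0 ≤ t := by
      have := hx (Fin.last m)
      rw [euclid_inner] at this
      simpa [hv, Fin.sum_univ_castSucc, Fin.snoc_castSucc, Fin.snoc_last] using this
    have goal : 0 ≤ (∑ j, c j * xs j) + δ * t := by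
      rcases ht.lt_or_eq with htpos | hteq
      · set z : Fin n → ℝ := fun j => -(xs j) / t with hz
        have hfz : L.mulVec z ≤ b := by
          intro i
          have h1 := hvi i
          simp only [Matrix.mulVec, dotProduct, hz]
          rw [show (∑ j, L i j * (-(xs j) / t)) = (∑ j, L i j * -(xs j)) / t by
            rw [Finset.sum_div]; exact Finset.sum_congr rfl fun j _ => by ring]
          rw [div_le_iff₀ htpos]
          have : (∑ j, L i j * -(xs j)) = -∑ j, L i j * xs j := by
            rw [← Finset.sum_neg_distrib]; exact Finset.sum_congr rfl fun j _ => by ring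
          rw [this]
          linarith
        have h2 := h z hfz
        rw [show (∑ j, c j * z j) = (∑ j, c j * -(xs j)) / t by
          rw [Finset.sum_div]; exact Finset.sum_congr rfl fun j _ => by simp [hz]; ring] at h2
        rw [div_le_iff₀ htpos] at h2
        have : (∑ j, c j * -(xs j)) = -∑ j, c j * xs j := by
          rw [← Finset.sum_neg_distrib]; exact Finset.sum_congr rfl fun j _ => by ring
        rw [this] at h2
        nlinarith
      · -- t = 0
        rw [← hteq, mul_zero, add_zero]
        by_contra hneg
        push_neg at hneg
        obtain ⟨x₀, hx₀⟩ := hfeas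
        have hx₀c := h x₀ hx₀
        set s : ℝ := (δ + 1 - ∑ j, c j * x₀ j) / (-∑ j, c j * xs j) with hs
        have hnum : (0:ℝ) < δ + 1 - ∑ j, c j * x₀ j := by linarith
        have hden : (0:ℝ) < -∑ j, c j * xs j := by linarith
        have hspos : 0 < s := div_pos hnum hden
        have hfx1 : L.mulVec (fun j => x₀ j - s * xs j) ≤ b := by
          intro i
          simp only [Matrix.mulVec, dotProduct]
          have hexp : (∑ j, L i j * (x₀ j - s * xs j))
              = (∑ j, L i j * x₀ j) - s * ∑ j, L i j * xs j := by
            rw [Finset.mul_sum, ← Finset.sum_sub_distrib]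
            exact Finset.sum_congr rfl fun j _ => by ring
          rw [hexp]
          have hLx : 0 ≤ ∑ j, L i j * xs j := by
            have := hvi i; rw [← hteq] at this; simpa using this
          have hb := hx₀ i
          simp only [Matrix.mulVec, dotProduct] at hb
          nlinarith
        have h3 := h _ hfx1
        have hexp : (∑ j, c j * (x₀ j - s * xs j))
            = (∑ j, c j * x₀ j) - s * ∑ j, c j * xs j := by
          rw [Finset.mul_sum, ← Finset.sum_sub_distrib]
          exact Finset.sum_congr rfl fun j _ => by ring
        rw [hexp] at h3
        have hmul : s * (-∑ j, c j * xs j) = δ + 1 - ∑ j, c j * x₀ j := by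
          have hBne : (∑ j, c j * xs j) ≠ 0 := ne_of_lt (by linarith)
          rw [hs]
          field_simp
        nlinarith
    rw [euclid_inner]
    have : (∑ j : Fin (n + 1), cv j * x j) = (∑ j, c j * xs j) + δ * t := by
      rw [Fin.sum_univ_castSucc]
      simp [hcv, Fin.snoc_castSucc, Fin.snoc_last, hxs, htdef]
    rw [this]
    exact goal
  obtain ⟨y', hy'0, hy'sum⟩ := farkas_cone v cv key
  refine ⟨fun i => y' i.castSucc, fun i => hy'0 _, ?_, ?_⟩
  · intro j
    have := congrArg (fun w : EuclideanSpace ℝ (Fin (n + 1)) => w j.castSucc) hy'sum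
    simp only at this
    rw [euclid_sum_apply] at this
    rw [Fin.sum_univ_castSucc] at this
    simpa [hv, hcv, Fin.snoc_castSucc, Fin.snoc_last] using this
  · have := congrArg (fun w : EuclideanSpace ℝ (Fin (n + 1)) => w (Fin.last n)) hy'sum
    simp only at this
    rw [euclid_sum_apply] at this
    rw [Fin.sum_univ_castSucc] at this
    simp only [hv, hcv, Fin.snoc_castSucc, Fin.snoc_last] at this
    have hlast := hy'0 (Fin.last m)
    nlinarith [hy'0 (Fin.last m)]


/-- Farkas' lemma (Lemma 1 of the paper): if the system `L x ≤ b` has a solution,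
then every solution of `L x ≤ b` satisfies `M x ≤ d` if and only if there exists a
nonnegative matrix `G` with `G L = M` and `G b ≤ d`. Inequalities between vectors
are entrywise. -/
theorem farkas_implication_iff_nonneg_multiplier
    (m n k : ℕ) (L : Matrix (Fin m) (Fin n) ℝ) (b : Fin m → ℝ)
    (M : Matrix (Fin k) (Fin n) ℝ) (d : Fin k → ℝ)
    (hfeas : ∃ x : Fin n → ℝ, L.mulVec x ≤ b) :
    (∀ x : Fin n → ℝ, L.mulVec x ≤ b → M.mulVec x ≤ d) ↔
      ∃ G : Matrix (Fin k) (Fin m) ℝ,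
        (∀ i j, 0 ≤ G i j) ∧ G * L = M ∧ G.mulVec b ≤ d := by
  constructor
  · intro h
    have hrow : ∀ r : Fin k, ∃ y : Fin m → ℝ, (∀ i, 0 ≤ y i) ∧
        (∀ j, ∑ i, y i * L i j = M r j) ∧ ∑ i, y i * b i ≤ d r := by
      intro r
      apply farkas_affine L b hfeas (fun j => M r j) (d r)
      intro x hx
      have := h x hx r
      simpa [Matrix.mulVec, dotProduct] using this
    choose y hy0 hyL hyb using hrow
    refine ⟨Matrix.of y, fun r i => hy0 r i, ?_, ?_⟩
    · ext r j
      simp only [Matrix.mul_apply, Matrix.of_apply]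
      exact hyL r j
    · intro r
      simpa [Matrix.mulVec, dotProduct] using hyb r
  · rintro ⟨G, hG0, hGL, hGb⟩ x hx r
    have h1 : M.mulVec x r = G.mulVec (L.mulVec x) r := by
      rw [← hGL, ← Matrix.mulVec_mulVec]
    rw [h1]
    have h2 : G.mulVec (L.mulVec x) r ≤ G.mulVec b r := by
      simp only [Matrix.mulVec, dotProduct]
      exact Finset.sum_le_sum fun i _ =>
        mul_le_mul_of_nonneg_left (hx i) (hG0 r i)
    exact le_trans h2 (hGb r)
end

section
/- Let F be a real p×m matrix, H ∈ ℝ^p, and let P₀ = {U ∈ ℝ^m : F U ≤ H} be nonempty. Let F' be a real q×m matrix, H' ∈ ℝ^q, and P = {U ∈ ℝ^m : F' U ≤ H'}. Suppose (s*, r*, G*) with s* > 0 and G* a q×p matrix with nonnegative entries satisfies G* F = F', G* H ≤ s* H' + F' r*, and s* ≤ s for every (s, r, G) with s > 0, G having nonnegative entries, G F = F', and G H ≤ s H' + F' r. Then β* = 1/s* and t* = −r*/s* satisfy β* P₀ + t* ⊆ P, and β* ≥ β for every scalar β > 0 and vector t ∈ ℝ^m with β P₀ + t ⊆ P. In other words,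 the optimal solution of the linear program yields the maximum inner homothetic approximation of P by P₀. -/
open Finset

lemma conic_caratheodory_s5 {E : Type*} [AddCommGroup E] [Module ℝ E] {ι : Type*} [Fintype ι] [DecidableEq ι] (v : ι → E) :
    ∀ (s : Finset ι) (g : ι → ℝ), (∀ i, 0 ≤ g i) →
    ∃ (t : Finset ι) (c : ι → ℝ), (∀ i, 0 ≤ c i) ∧
      LinearIndependent ℝ (fun i : t => v i) ∧
      ∑ i ∈ t, c i • v i = ∑ i ∈ s, g i • v i := by
  intro s
  induction s using Finset.strongInduction with
  | _ s ih =>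
    intro g hg
    by_cases hli : LinearIndependent ℝ (fun i : s => v i)
    · exact ⟨s, g, hg, hli, rfl⟩
    · obtain ⟨d, hd0, i₀, hi₀⟩ := Fintype.not_linearIndependent_iff.1 hli
      classical
      obtain ⟨e, he0, j₀, hj₀⟩ : ∃ e : s → ℝ, ∑ i, e i • v i = 0 ∧ ∃ j : s, 0 < e j := by
        rcases lt_or_gt_of_ne hi₀ with h | h
        · exact ⟨-d, by rw [← neg_eq_zero] at hd0; rw [← hd0]; simp [neg_smul], i₀, by simpa using h⟩
        · exact ⟨d, hd0, i₀, h⟩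
      set D : ι → ℝ := fun i => if h : i ∈ s then e ⟨i, h⟩ else 0 with hD
      have hDsum : ∑ i ∈ s, D i • v i = 0 := by
        rw [← he0, ← Finset.sum_attach s (fun i => D i • v i)]
        refine Finset.sum_congr rfl fun i _ => by simp [hD, i.2]
      have hj₀' : 0 < D j₀ := by simp [hD, j₀.2, hj₀]
      have hne : (s.filter (fun i => 0 < D i)).Nonempty := ⟨j₀, by simp [j₀.2, hj₀']⟩
      obtain ⟨k, hk, hkmin⟩ := Finset.exists_min_image _ (fun i => g i / D i) hne
      simp only [Finset.mem_filter] at hk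
      set τ := g k / D k with hτ
      have hτ0 : 0 ≤ τ := div_nonneg (hg k) hk.2.le
      set g' : ι → ℝ := fun i => g i - τ * D i with hg'
      have hg'0 : ∀ i ∈ s, 0 ≤ g' i := by
        intro i hi
        by_cases hDi : 0 < D i
        · have h1 : τ ≤ g i / D i := hkmin i (Finset.mem_filter.2 ⟨hi, hDi⟩)
          have h2 : τ * D i ≤ g i := (le_div_iff₀ hDi).1 h1
          simp only [hg']; linarith
        · push_neg at hDi
          simp only [hg']
          nlinarith [hg i, mul_nonpos_of_nonneg_of_nonpos hτ0 hDi]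
      have hg'k : g' k = 0 := by
        simp only [hg', hτ]
        rw [div_mul_cancel₀ _ hk.2.ne', sub_self]
      have h1 : ∑ i ∈ s, g' i • v i = ∑ i ∈ s, g i • v i := by
        simp only [hg', sub_smul, Finset.sum_sub_distrib, mul_smul]
        rw [← Finset.smul_sum, hDsum, smul_zero, sub_zero]
      have h2 : ∑ i ∈ s, g' i • v i = g' k • v k + ∑ i ∈ s.erase k, g' i • v i :=
        (Finset.add_sum_erase s _ hk.1).symm
      have hsum : ∑ i ∈ s.erase k, g' i • v i = ∑ i ∈ s, g i • v i := by
        rw [← h1, h2, hg'k, zero_smul, zero_add]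
      obtain ⟨t, c, hc0, hcli, hct⟩ := ih (s.erase k) (Finset.erase_ssubset hk.1)
        (fun i => if i ∈ s.erase k then g' i else 0)
        (fun i => by
          by_cases h : i ∈ s.erase k
          · simpa [h] using hg'0 i (Finset.mem_of_mem_erase h)
          · simp [h])
      refine ⟨t, c, hc0, hcli, ?_⟩
      rw [hct, ← hsum]
      exact Finset.sum_congr rfl fun i hi => by simp [hi]

lemma isClosed_fin_cone {E : Type*} [NormedAddCommGroup E] [NormedSpace ℝ E]
    [FiniteDimensional ℝ E] {ι : Type*} [Fintype ι] [DecidableEq ι] (v : ι → E) :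
    IsClosed {x : E | ∃ g : ι → ℝ, (∀ i, 0 ≤ g i) ∧ ∑ i, g i • v i = x} := by
  classical
  have key : {x : E | ∃ g : ι → ℝ, (∀ i, 0 ≤ g i) ∧ ∑ i, g i • v i = x} =
      ⋃ t ∈ {t : Finset ι | LinearIndependent ℝ (fun i : t => v i)},
        {x : E | ∃ g : t → ℝ, (∀ i, 0 ≤ g i) ∧ ∑ i, g i • v (i : ι) = x} := by
    ext x
    simp only [Set.mem_iUnion, Set.mem_setOf_eq]
    constructor
    · rintro ⟨g, hg, rfl⟩
      obtain ⟨t, c, hc0, hli, hct⟩ := conic_caratheodory_s5 v Finset.univ g hg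
      refine ⟨t, hli, fun i => c i, fun i => hc0 i, ?_⟩
      rw [← hct, ← Finset.sum_attach t (fun i => c i • v i)]
      exact Finset.sum_congr (Finset.univ_eq_attach _) (fun i _ => rfl)
    · rintro ⟨t, hli, g, hg, rfl⟩
      refine ⟨fun i => if h : i ∈ t then g ⟨i, h⟩ else 0, fun i => by
        by_cases h : i ∈ t <;> simp [h, hg], ?_⟩
      rw [← Finset.sum_subset (Finset.subset_univ t)
        (by intro i _ hi; simp [hi]), ← Finset.sum_attach t
          (fun i => (if h : i ∈ t then g ⟨i, h⟩ else 0) • v i)]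
      refine Finset.sum_congr rfl fun i _ => by simp [i.2]
  rw [key]
  refine Set.Finite.isClosed_biUnion (Set.toFinite _) ?_
  rintro t ht
  have hinj : LinearMap.ker (Fintype.linearCombination ℝ (fun i : t => v i)) = ⊥ := by
    rw [LinearMap.ker_eq_bot']
    intro g hgker
    have := Fintype.linearIndependent_iff.1 ht g (by
      simpa [Fintype.linearCombination_apply] using hgker)
    exact funext this
  have hset : {x : E | ∃ g : t → ℝ, (∀ i, 0 ≤ g i) ∧ ∑ i, g i • v (i : ι) = x} =
      (Fintype.linearCombination ℝ (fun i : t => v i)) '' {g | ∀ i, 0 ≤ g i} := by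
    ext x
    simp [Fintype.linearCombination_apply, Set.mem_image, eq_comm]
  rw [hset]
  have horth : IsClosed {g : t → ℝ | ∀ i, 0 ≤ g i} := by
    have : {g : t → ℝ | ∀ i, 0 ≤ g i} = ⋂ i, {g : t → ℝ | 0 ≤ g i} := by
      ext g; simp [Set.mem_iInter]
    rw [this]
    exact isClosed_iInter fun i => isClosed_le continuous_const (continuous_apply i)
  exact ((Fintype.linearCombination ℝ (fun i : t => v i)).isClosedEmbedding_of_injective
    hinj).isClosedMap _ horth


lemma piLp_sum_apply {ι κ : Type*} [Fintype ι] [Fintype κ]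
    (f : κ → EuclideanSpace ℝ ι) (k : ι) :
    (∑ i, f i) k = ∑ i, f i k := by
  induction (Finset.univ : Finset κ) using Finset.cons_induction with
  | empty => rfl
  | cons a s ha ih => rw [Finset.sum_cons, Finset.sum_cons, PiLp.add_apply, ih]

open RealInnerProductSpace in
lemma farkas {p m : ℕ} (F : Matrix (Fin p) (Fin m) ℝ) (H : Fin p → ℝ) (c : Fin m → ℝ) (d : ℝ)
    (hne : ∃ U, F.mulVec U ≤ H)
    (h : ∀ U, F.mulVec U ≤ H → ∑ j, c j * U j ≤ d) :
    ∃ g : Fin p → ℝ, (∀ i, 0 ≤ g i) ∧ (∀ j, ∑ i, g i * F i j = c j) ∧ ∑ i, g i * H i ≤ d := by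
  classical
  set v : Fin p ⊕ Unit → EuclideanSpace ℝ (Fin m ⊕ Unit) :=
    Sum.elim (fun i => WithLp.toLp 2 (Sum.elim (fun j => F i j) (fun _ => H i) : Fin m ⊕ Unit → ℝ))
      (fun _ => WithLp.toLp 2 (Sum.elim (fun _ => 0) (fun _ => 1) : Fin m ⊕ Unit → ℝ)) with hv
  set S : Set (EuclideanSpace ℝ (Fin m ⊕ Unit)) :=
    {x | ∃ g : Fin p ⊕ Unit → ℝ, (∀ i, 0 ≤ g i) ∧ ∑ i, g i • v i = x} with hS
  have hmemS : ∀ i, v i ∈ S := by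
    intro i
    refine ⟨fun k => if k = i then 1 else 0, fun k => by positivity, ?_⟩
    simp [ite_smul]
  have smul_mem : ∀ ⦃a : ℝ⦄, 0 < a → ∀ ⦃x : EuclideanSpace ℝ (Fin m ⊕ Unit)⦄,
      x ∈ S → a • x ∈ S := by
    rintro a ha x ⟨g, hg, rfl⟩
    refine ⟨fun i => a * g i, fun i => mul_nonneg ha.le (hg i), ?_⟩
    rw [Finset.smul_sum]
    exact Finset.sum_congr rfl fun i _ => by dsimp only; rw [mul_smul]
  have add_mem : ∀ ⦃x : EuclideanSpace ℝ (Fin m ⊕ Unit)⦄, x ∈ S →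
      ∀ ⦃y : EuclideanSpace ℝ (Fin m ⊕ Unit)⦄, y ∈ S → x + y ∈ S := by
    rintro x ⟨g, hg, rfl⟩ y ⟨g', hg', rfl⟩
    refine ⟨fun i => g i + g' i, fun i => add_nonneg (hg i) (hg' i), ?_⟩
    rw [← Finset.sum_add_distrib]
    exact Finset.sum_congr rfl fun i _ => by dsimp only; rw [add_smul]
  set K : ConvexCone ℝ (EuclideanSpace ℝ (Fin m ⊕ Unit)) := ⟨S, smul_mem, add_mem⟩ with hK
  have hSclosed : IsClosed S := isClosed_fin_cone v
  have hSne : S.Nonempty := ⟨v (Sum.inr ()), hmemS _⟩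
  set b : EuclideanSpace ℝ (Fin m ⊕ Unit) := WithLp.toLp 2 (Sum.elim c (fun _ => d) : Fin m ⊕ Unit → ℝ) with hb
  have hbS : b ∈ S := by
    by_contra hbS
    obtain ⟨y, hy1, hy2⟩ :=
      ProperCone.hyperplane_separation' (x₀ := b)
        ({ carrier := S
           add_mem' := fun hx hy => add_mem hx hy
           zero_mem' := ⟨0, fun _ => le_rfl, by simp⟩
           smul_mem' := fun c x ⟨g, hg, hgx⟩ => ⟨fun i => (c : ℝ) * g i,
             fun i => mul_nonneg c.2 (hg i), by
               rw [← hgx, Finset.smul_sum]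
               exact Finset.sum_congr rfl fun i _ => by rw [mul_smul]; rfl⟩
           isClosed' := hSclosed } : ProperCone ℝ (EuclideanSpace ℝ (Fin m ⊕ Unit))) hbS
    set U' : Fin m → ℝ := fun j => y (Sum.inl j) with hU'
    set lam : ℝ := y (Sum.inr ()) with hlam
    have hinner : ∀ x : EuclideanSpace ℝ (Fin m ⊕ Unit),
        ⟪x, y⟫ = ∑ j, x (Sum.inl j) * U' j + x (Sum.inr ()) * lam := by
      intro x
      simp [PiLp.inner_apply, RCLike.inner_apply, Fintype.sum_sum_type, hU', hlam, mul_comm]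
    have hlam0 : 0 ≤ lam := by
      have := hy1 _ (hmemS (Sum.inr ()))
      rw [hinner] at this
      simpa [hv] using this
    have hrow : ∀ i, 0 ≤ ∑ j, F i j * U' j + H i * lam := by
      intro i
      have := hy1 _ (hmemS (Sum.inl i))
      rw [hinner] at this
      simpa [hv] using this
    have hyb : ∑ j, c j * U' j + d * lam < 0 := by
      have h2 : ⟪b, y⟫ < 0 := hy2
      rw [hinner] at h2
      simpa [hb] using h2
    rcases hlam0.lt_or_eq with hpos | hzero
    · -- lam > 0
      set U : Fin m → ℝ := fun j => -(U' j) / lam with hU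
      have hdotF : ∀ i, (∑ j, F i j * U j) * lam = -∑ j, F i j * U' j := by
        intro i
        rw [Finset.sum_mul, ← Finset.sum_neg_distrib]
        refine Finset.sum_congr rfl fun j _ => ?_
        simp only [hU]
        field_simp
      have hFU : F.mulVec U ≤ H := by
        intro i
        show ∑ j, F i j * U j ≤ H i
        nlinarith [hrow i, hdotF i]
      have hcUd := h U hFU
      have hdotc : (∑ j, c j * U j) * lam = -∑ j, c j * U' j := by
        rw [Finset.sum_mul, ← Finset.sum_neg_distrib]
        refine Finset.sum_congr rfl fun j _ => ?_
        simp only [hU]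
        field_simp
      nlinarith [hcUd, hdotc, hyb]
    · -- lam = 0
      obtain ⟨U₀, hU₀⟩ := hne
      have hcU₀ : ∑ j, c j * U₀ j ≤ d := h U₀ hU₀
      have hcU' : ∑ j, c j * U' j < 0 := by rw [← hzero] at hyb; simpa using hyb
      set τ : ℝ := (d + 1 - ∑ j, c j * U₀ j) / (-(∑ j, c j * U' j)) with hτ
      have hτ0 : 0 ≤ τ := div_nonneg (by linarith) (by linarith)
      set U : Fin m → ℝ := fun j => U₀ j - τ * U' j with hU
      have hdotF : ∀ i, ∑ j, F i j * U j = ∑ j, F i j * U₀ j - τ * ∑ j, F i j * U' j := by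
        intro i
        rw [Finset.mul_sum, ← Finset.sum_sub_distrib]
        exact Finset.sum_congr rfl fun j _ => by simp only [hU]; ring
      have hFU : F.mulVec U ≤ H := by
        intro i
        show ∑ j, F i j * U j ≤ H i
        rw [hdotF i]
        have hr := hrow i
        rw [← hzero] at hr
        have hr' : 0 ≤ ∑ j, F i j * U' j := by simpa using hr
        have hU₀i : ∑ j, F i j * U₀ j ≤ H i := hU₀ i
        nlinarith
      have hcUd := h U hFU
      have hdotc : ∑ j, c j * U j = ∑ j, c j * U₀ j - τ * ∑ j, c j * U' j := by
        rw [Finset.mul_sum, ← Finset.sum_sub_distrib]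
        exact Finset.sum_congr rfl fun j _ => by simp only [hU]; ring
      rw [hdotc] at hcUd
      have h5 : τ * (-(∑ j, c j * U' j)) = d + 1 - ∑ j, c j * U₀ j := by
        rw [hτ]; exact div_mul_cancel₀ _ (by linarith)
      rw [mul_neg] at h5
      linarith
  obtain ⟨g, hg0, hgsum⟩ := hbS
  have hcomp : ∀ k, ∑ i, g i * v i k = b k := by
    intro k
    rw [← hgsum, piLp_sum_apply (fun i => g i • v i) k]
    exact Finset.sum_congr rfl fun i _ => by simp [PiLp.smul_apply]
  refine ⟨fun i => g (Sum.inl i), fun i => hg0 _, ?_, ?_⟩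
  · intro j
    have := hcomp (Sum.inl j)
    simpa [hv, hb, Fintype.sum_sum_type] using this
  · have := hcomp (Sum.inr ())
    simp [hv, hb, Fintype.sum_sum_type] at this
    nlinarith [hg0 (Sum.inr ()), this]



/-- Theorem 1 of the paper (inner approximation part): if `(s*, r*, G*)` is an optimal
solution of the linear program
  minimize s subject to s > 0, G ≥ 0, G F = F', G H ≤ s H' + F' r,
then `β* = 1/s*`, `t* = -r*/s*` give the maximum inner homothetic approximation of
`P = {U | F' U ≤ H'}` by `P₀ = {U | F U ≤ H}`: `β* P₀ + t* ⊆ P`, and `β ≤ β*` for all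
`β > 0`, `t` with `β P₀ + t ⊆ P`. -/
theorem optimal_LP_solution_gives_maximum_inner_approximation
    (p q m : ℕ) (F : Matrix (Fin p) (Fin m) ℝ) (H : Fin p → ℝ)
    (F' : Matrix (Fin q) (Fin m) ℝ) (H' : Fin q → ℝ)
    (hne : ({U : Fin m → ℝ | F.mulVec U ≤ H}).Nonempty)
    (sStar : ℝ) (rStar : Fin m → ℝ) (GStar : Matrix (Fin q) (Fin p) ℝ)
    (hsStar : 0 < sStar) (hGStar : ∀ i j, 0 ≤ GStar i j)
    (heq : GStar * F = F')
    (hineq : GStar.mulVec H ≤ sStar • H' + F'.mulVec rStar)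
    (hopt : ∀ (s : ℝ) (r : Fin m → ℝ) (G : Matrix (Fin q) (Fin p) ℝ),
      0 < s → (∀ i j, 0 ≤ G i j) → G * F = F' →
      G.mulVec H ≤ s • H' + F'.mulVec r → sStar ≤ s) :
    ((fun ξ => (1 / sStar) • ξ + (-(1 / sStar) • rStar)) ''
        {U : Fin m → ℝ | F.mulVec U ≤ H} ⊆ {U : Fin m → ℝ | F'.mulVec U ≤ H'}) ∧
      ∀ (β : ℝ) (t : Fin m → ℝ), 0 < β →
        (fun ξ => β • ξ + t) '' {U : Fin m → ℝ | F.mulVec U ≤ H}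
          ⊆ {U : Fin m → ℝ | F'.mulVec U ≤ H'} →
        β ≤ 1 / sStar := by
  constructor
  · -- inner approximation
    rintro _ ⟨U, hU, rfl⟩
    have key : F'.mulVec ((1 / sStar) • U + (-(1 / sStar) • rStar)) =
        (1 / sStar) • (GStar.mulVec (F.mulVec U)) + (-(1 / sStar)) • F'.mulVec rStar := by
      rw [Matrix.mulVec_add, Matrix.mulVec_smul, Matrix.mulVec_smul, ← heq,
        ← Matrix.mulVec_mulVec]
    intro i
    have hmono : GStar.mulVec (F.mulVec U) i ≤ GStar.mulVec H i := by
      simp only [Matrix.mulVec, dotProduct]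
      exact Finset.sum_le_sum fun k _ => mul_le_mul_of_nonneg_left (hU k) (hGStar i k)
    have h1 : GStar.mulVec (F.mulVec U) i ≤ sStar * H' i + F'.mulVec rStar i :=
      le_trans hmono (hineq i)
    have hs : 0 ≤ 1 / sStar := by positivity
    show F'.mulVec ((1 / sStar) • U + (-(1 / sStar) • rStar)) i ≤ H' i
    rw [key]
    show (1 / sStar) * GStar.mulVec (F.mulVec U) i
      + (-(1 / sStar)) * F'.mulVec rStar i ≤ H' i
    calc (1 / sStar) * GStar.mulVec (F.mulVec U) i + (-(1 / sStar)) * F'.mulVec rStar i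
        = (1 / sStar) * (GStar.mulVec (F.mulVec U) i - F'.mulVec rStar i) := by ring
      _ ≤ (1 / sStar) * (sStar * H' i) := mul_le_mul_of_nonneg_left (by linarith) hs
      _ = H' i := by field_simp
  · -- optimality
    intro β t hβ hsub
    have hfark : ∀ i : Fin q, ∃ g : Fin p → ℝ, (∀ k, 0 ≤ g k) ∧
        (∀ j, ∑ k, g k * F k j = F' i j) ∧
        ∑ k, g k * H k ≤ (H' i - F'.mulVec t i) / β := by
      intro i
      refine farkas F H (fun j => F' i j) _ hne ?_
      intro U hU
      have := hsub ⟨U, hU, rfl⟩ i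
      rw [Matrix.mulVec_add, Matrix.mulVec_smul] at this
      have h2 : β * F'.mulVec U i + F'.mulVec t i ≤ H' i := this
      rw [le_div_iff₀ hβ]
      show F'.mulVec U i * β ≤ H' i - F'.mulVec t i
      nlinarith
    choose g hg0 hgF hgH using hfark
    have hopt' := hopt (1 / β) ((-(1 / β)) • t) (fun i k => g i k) (by positivity)
      (fun i k => hg0 i k)
      (by
        ext i j
        show ∑ k, g i k * F k j = F' i j
        exact hgF i j)
      (by
        intro i
        have := hgH i
        show ∑ k, g i k * H k ≤ (1 / β) * H' i + F'.mulVec ((-(1 / β)) • t) i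
        rw [Matrix.mulVec_smul]
        show ∑ k, g i k * H k ≤ (1 / β) * H' i + (-(1 / β)) * F'.mulVec t i
        calc ∑ k, g i k * H k ≤ (H' i - F'.mulVec t i) / β := this
          _ = (1 / β) * H' i + (-(1 / β)) * F'.mulVec t i := by field_simp; ring
        )
    rw [le_div_iff₀ hβ] at hopt'
    rw [le_div_iff₀ hsStar]
    nlinarith
end

section
/- Let F be a real p×m matrix, H ∈ ℝ^p, and let P₀ = {U ∈ ℝ^m : F U ≤ H}. Let F' be a real q×m matrix, H' ∈ ℝ^q, and let P = {U ∈ ℝ^m : F' U ≤ H'} be nonempty. Then for every scalar β > 0 and vector t ∈ ℝ^m, the inclusion P ⊆ β P₀ + t holds if and only if there exists a real p×q matrix G with all entries nonnegative such that G F' = F and G H' ≤ β H + F t (inequalities entrywise). -/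
open Finset Matrix

lemma sum_subtype_of_support {ι E : Type*} [Fintype ι] [AddCommGroup E]
    (s : Finset ι) (f : ι → E) (hf : ∀ i ∉ s, f i = 0) :
    ∑ i : ↥s, f ↑i = ∑ i, f i := by
  rw [Finset.sum_coe_sort s f]
  exact Finset.sum_subset (Finset.subset_univ s) (fun i _ hi => hf i hi)

open Classical in
lemma cone_caratheodory_aux {ι E : Type*} [Fintype ι] [AddCommGroup E] [Module ℝ E]
    (v : ι → E) :
    ∀ (N : ℕ) (c : ι → ℝ), (Finset.univ.filter fun i => c i ≠ 0).card ≤ N →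
      (∀ i, 0 ≤ c i) →
      ∃ d : ι → ℝ, (∀ i, 0 ≤ d i) ∧ (∑ i, d i • v i = ∑ i, c i • v i) ∧
        LinearIndependent ℝ (fun i : {i // d i ≠ 0} => v ↑i) := by
  intro N
  induction N with
  | zero =>
    intro c hcard hc
    refine ⟨c, hc, rfl, ?_⟩
    have : ∀ i, c i = 0 := by
      intro i
      by_contra h
      have : i ∈ Finset.univ.filter fun i => c i ≠ 0 := by simp [h]
      have := Finset.card_pos.mpr ⟨i, this⟩
      omega
    have : IsEmpty {i // c i ≠ 0} := ⟨fun ⟨i, hi⟩ => hi (this i)⟩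
    exact linearIndependent_empty_type
  | succ N ih =>
    intro c hcard hc
    by_cases hLI : LinearIndependent ℝ (fun i : {i // c i ≠ 0} => v ↑i)
    · exact ⟨c, hc, rfl, hLI⟩
    · obtain ⟨g, hg, i0, hgi0⟩ := Fintype.not_linearIndependent_iff.mp hLI
      -- get a relation e : ι → ℝ supported on support of c with some positive entry
      have key : ∃ e : ι → ℝ, (∑ i, e i • v i = 0) ∧ (∀ i, c i = 0 → e i = 0) ∧ ∃ i, 0 < e i := by
        have mk : ∀ (g : {i // c i ≠ 0} → ℝ), (∑ i, g i • v ↑i = 0) →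
            ∃ e : ι → ℝ, (∑ i, e i • v i = 0) ∧ (∀ i, c i = 0 → e i = 0) ∧
              ∀ i (h : c i ≠ 0), e i = g ⟨i, h⟩ := by
          intro g hg
          set e : ι → ℝ := fun i => if h : c i ≠ 0 then g ⟨i, h⟩ else 0 with he
          have hsupp : ∀ i, c i = 0 → e i = 0 := fun i hi => by simp [he, hi]
          have hval : ∀ i (h : c i ≠ 0), e i = g ⟨i, h⟩ := fun i h => by simp [he, h]
          refine ⟨e, ?_, hsupp, hval⟩
          have h1 : ∑ i, e i • v i = ∑ i ∈ Finset.univ.filter (fun i => c i ≠ 0), e i • v i :=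
            (Finset.sum_subset (Finset.subset_univ _) (fun i _ hi => by
              simp only [Finset.mem_filter, Finset.mem_univ, true_and, not_not] at hi
              rw [hsupp i hi, zero_smul])).symm
          have h2 : ∑ i ∈ Finset.univ.filter (fun i => c i ≠ 0), e i • v i
              = ∑ i : {i // c i ≠ 0}, e ↑i • v ↑i :=
            Finset.sum_subtype _ (by simp) _
          rw [h1, h2, ← hg]
          exact Finset.sum_congr rfl fun i _ => by rw [hval _ i.2]
        rcases lt_or_gt_of_ne hgi0 with hneg | hpos
        · obtain ⟨e, he1, he2, he3⟩ := mk (-g) (by simpa using hg)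
          exact ⟨e, he1, he2, i0, by rw [he3 _ i0.2]; simpa using hneg⟩
        · obtain ⟨e, he1, he2, he3⟩ := mk g hg
          exact ⟨e, he1, he2, i0, by rw [he3 _ i0.2]; exact hpos⟩
      obtain ⟨e, hesum, hesupp, hepos⟩ := key
      set T := Finset.univ.filter fun i => 0 < e i with hT
      have hTne : T.Nonempty := ⟨hepos.choose, by simp [hT, hepos.choose_spec]⟩
      obtain ⟨i1, hi1T, hmin⟩ := T.exists_min_image (fun i => c i / e i) hTne
      have hei1 : 0 < e i1 := by simpa [hT] using hi1T
      set lam := c i1 / e i1 with hlam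
      have hlam0 : 0 ≤ lam := div_nonneg (hc i1) hei1.le
      set d := fun i => c i - lam * e i with hd
      have hdnn : ∀ i, 0 ≤ d i := by
        intro i
        by_cases h : 0 < e i
        · have := hmin i (by simp [hT, h])
          have : lam * e i ≤ c i := by
            rw [← le_div_iff₀ h]; exact this
          simp [hd]; linarith
        · push_neg at h
          have : lam * e i ≤ 0 := mul_nonpos_of_nonneg_of_nonpos hlam0 h
          have := hc i
          simp [hd]; linarith
      have hdsum : ∑ i, d i • v i = ∑ i, c i • v i := by
        simp only [hd, sub_smul, Finset.sum_sub_distrib, mul_smul]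
        rw [← Finset.smul_sum, hesum, smul_zero, sub_zero]
      have hdsupp : ∀ i, c i = 0 → d i = 0 := by
        intro i hi; simp [hd, hi, hesupp i hi]
      have hdi1 : d i1 = 0 := by
        simp only [hd, hlam]
        field_simp
        ring
      have hci1 : c i1 ≠ 0 := by
        intro h; have := hesupp i1 h; rw [this] at hei1; exact lt_irrefl 0 hei1
      have hcard' : (Finset.univ.filter fun i => d i ≠ 0).card ≤ N := by
        have hss : (Finset.univ.filter fun i => d i ≠ 0) ⊂ (Finset.univ.filter fun i => c i ≠ 0) := by
          constructor
          · intro i hi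
            simp only [Finset.mem_filter, Finset.mem_univ, true_and] at hi ⊢
            intro h; exact hi (hdsupp i h)
          · intro hsub
            have : i1 ∈ Finset.univ.filter fun i => d i ≠ 0 :=
              hsub (by simp [hci1])
            simp [hdi1] at this
        have := Finset.card_lt_card hss
        omega
      obtain ⟨d', h1, h2, h3⟩ := ih d hcard' hdnn
      exact ⟨d', h1, h2.trans hdsum, h3⟩

section
variable {ι : Type*} [Fintype ι] {k : ℕ}

noncomputable def comboMap {ι : Type*} [Fintype ι] (v : ι → EuclideanSpace ℝ (Fin k)) :
    (ι → ℝ) →ₗ[ℝ] EuclideanSpace ℝ (Fin k) where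
  toFun c := ∑ i, c i • v i
  map_add' a b := by simp [add_smul, Finset.sum_add_distrib]
  map_smul' r a := by simp [smul_smul, Finset.smul_sum]

lemma isClosed_coneSet (v : ι → EuclideanSpace ℝ (Fin k)) :
    IsClosed {x : EuclideanSpace ℝ (Fin k) |
      ∃ c : ι → ℝ, (∀ i, 0 ≤ c i) ∧ x = ∑ i, c i • v i} := by
  classical
  have hset : {x : EuclideanSpace ℝ (Fin k) |
        ∃ c : ι → ℝ, (∀ i, 0 ≤ c i) ∧ x = ∑ i, c i • v i} =
      ⋃ s : {s : Finset ι // LinearIndependent ℝ (fun i : ↥s => v ↑i)},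
        (comboMap (fun i : ↥(s : Finset ι) => v ↑i)) '' {c | ∀ i, 0 ≤ c i} := by
    ext x
    simp only [Set.mem_setOf_eq, Set.mem_iUnion, Set.mem_image]
    constructor
    · rintro ⟨c, hc, rfl⟩
      obtain ⟨d, hd, hsum, hLI⟩ :=
        cone_caratheodory_aux v (Finset.univ.filter fun i => c i ≠ 0).card c le_rfl hc
      set s : Finset ι := Finset.univ.filter fun i => d i ≠ 0 with hs
      have hmem : ∀ i : ι, i ∈ s ↔ d i ≠ 0 := by intro i; simp [hs]
      have hLI' : LinearIndependent ℝ (fun i : ↥s => v ↑i) := by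
        have heq : ((fun i : {i // d i ≠ 0} => v ↑i) ∘ (Equiv.subtypeEquivRight hmem))
            = fun i : ↥s => v ↑i := by
          funext i; simp [Equiv.subtypeEquivRight]; rfl
        exact heq ▸ hLI.comp (Equiv.subtypeEquivRight hmem) (Equiv.injective _)
      refine ⟨⟨s, hLI'⟩, fun i : ↥s => d ↑i, fun i => hd ↑i, ?_⟩
      show ∑ i : ↥s, d ↑i • v ↑i = _
      rw [← hsum]
      exact sum_subtype_of_support s (fun i => d i • v i) (fun i hi => by
        show d i • v i = 0
        rw [(not_not.mp (fun h => hi ((hmem i).mpr h)) : d i = 0), zero_smul])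
    · rintro ⟨⟨s, _⟩, c', hc', rfl⟩
      refine ⟨fun i => if h : i ∈ s then c' ⟨i, h⟩ else 0, fun i => ?_, ?_⟩
      · by_cases h : i ∈ s <;> simp [h, hc' _]
      · show (_ : EuclideanSpace ℝ (Fin k)) = ∑ i, _ • v i
        rw [← sum_subtype_of_support s _ (fun i hi => by rw [dif_neg hi, zero_smul])]
        show comboMap _ c' = _
        simp only [comboMap, LinearMap.coe_mk, AddHom.coe_mk]
        exact Finset.sum_congr rfl fun i _ => by rw [dif_pos i.2]
  rw [hset]
  apply isClosed_iUnion_of_finite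
  rintro ⟨s, hLI⟩
  have hker : LinearMap.ker (comboMap (fun i : ↥s => v ↑i)) = ⊥ := by
    rw [LinearMap.ker_eq_bot']
    intro c hc
    have := Fintype.linearIndependent_iff.mp hLI c hc
    funext i; exact this i
  have hdom : IsClosed {c : ↥s → ℝ | ∀ i, 0 ≤ c i} := by
    have : {c : ↥s → ℝ | ∀ i, 0 ≤ c i} = ⋂ i, (fun c : ↥s → ℝ => c i) ⁻¹' Set.Ici 0 := by
      ext c; simp [Set.mem_iInter]
    rw [this]
    exact isClosed_iInter fun i => isClosed_Ici.preimage (continuous_apply i)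
  exact ((comboMap _).isClosedEmbedding_of_injective hker).isClosedMap _ hdom
end

lemma dot_scaled {m : ℕ} (a u : Fin m → ℝ) (t : ℝ) :
    a ⬝ᵥ (fun j => u j * t) = (∑ j, a j * u j) * t := by
  simp only [dotProduct, Finset.sum_mul]
  exact Finset.sum_congr rfl fun j _ => by ring

lemma mulVec_scaled {q m : ℕ} (A : Matrix (Fin q) (Fin m) ℝ) (u : Fin m → ℝ) (t : ℝ) (i : Fin q) :
    A.mulVec (fun j => u j * t) i = (∑ j, A i j * u j) * t := by
  simp only [Matrix.mulVec, dotProduct, Finset.sum_mul]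
  exact Finset.sum_congr rfl fun j _ => by ring

lemma dot_sub_smul' {m : ℕ} (a x0 u : Fin m → ℝ) (lam : ℝ) :
    a ⬝ᵥ (x0 - lam • u) = a ⬝ᵥ x0 - lam * ∑ j, a j * u j := by
  simp only [dotProduct, Pi.sub_apply, Pi.smul_apply, smul_eq_mul, mul_sub,
    Finset.sum_sub_distrib, Finset.mul_sum]
  congr 1
  exact Finset.sum_congr rfl fun j _ => by ring

lemma mulVec_sub_smul' {q m : ℕ} (A : Matrix (Fin q) (Fin m) ℝ) (x0 u : Fin m → ℝ)
    (lam : ℝ) (i : Fin q) :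
    A.mulVec (x0 - lam • u) i = A.mulVec x0 i - lam * ∑ j, A i j * u j := by
  simp only [Matrix.mulVec, dotProduct, Pi.sub_apply, Pi.smul_apply, smul_eq_mul,
    mul_sub, Finset.sum_sub_distrib, Finset.mul_sum]
  congr 1
  exact Finset.sum_congr rfl fun j _ => by ring

open scoped InnerProductSpace in
lemma farkas_ineq {q m : ℕ} (A : Matrix (Fin q) (Fin m) ℝ) (c : Fin q → ℝ)
    (x0 : Fin m → ℝ) (hx0 : A.mulVec x0 ≤ c) (a : Fin m → ℝ) (b : ℝ)
    (hval : ∀ x : Fin m → ℝ, A.mulVec x ≤ c → a ⬝ᵥ x ≤ b) :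
    ∃ y : Fin q → ℝ, (∀ i, 0 ≤ y i) ∧ (∀ j, ∑ i, y i * A i j = a j) ∧ y ⬝ᵥ c ≤ b := by
  classical
  set w : Fin q ⊕ Unit → EuclideanSpace ℝ (Fin (m+1)) :=
    Sum.elim (fun i => WithLp.toLp 2 (Fin.snoc (A i) (c i) : Fin (m+1) → ℝ))
      (fun _ => WithLp.toLp 2 (Fin.snoc 0 1 : Fin (m+1) → ℝ)) with hw
  set K : ConvexCone ℝ (EuclideanSpace ℝ (Fin (m+1))) :=
    { carrier := {x : EuclideanSpace ℝ (Fin (m+1)) | ∃ cf : Fin q ⊕ Unit → ℝ, (∀ i, 0 ≤ cf i) ∧ x = ∑ i, cf i • w i}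
      smul_mem' := by
        rintro r hr x ⟨cf, hcf, rfl⟩
        exact ⟨fun i => r * cf i, fun i => mul_nonneg hr.le (hcf i), by
          rw [Finset.smul_sum]; exact Finset.sum_congr rfl fun i _ => (smul_smul r (cf i) (w i))⟩
      add_mem' := by
        rintro x ⟨cf, hcf, rfl⟩ y ⟨cg, hcg, rfl⟩
        exact ⟨fun i => cf i + cg i, fun i => add_nonneg (hcf i) (hcg i), by
          rw [← Finset.sum_add_distrib]
          exact Finset.sum_congr rfl fun i _ => (add_smul (cf i) (cg i) (w i)).symm⟩ } with hK
  have hKne : ((K : Set (EuclideanSpace ℝ (Fin (m+1))))).Nonempty := ⟨0, ⟨0, fun i => le_rfl, by simp⟩⟩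
  have hKcl : IsClosed (K : Set (EuclideanSpace ℝ (Fin (m+1)))) := isClosed_coneSet w
  -- generators belong to K
  have hgen : ∀ i0, w i0 ∈ K := by
    intro i0
    refine ⟨fun i => if i = i0 then 1 else 0, fun i => by positivity, ?_⟩
    simp [ite_smul]
  -- inner products in coordinates
  have hinner : ∀ x y : EuclideanSpace ℝ (Fin (m+1)), ⟪x, y⟫_ℝ =
      (∑ j : Fin m, x (Fin.castSucc j) * y (Fin.castSucc j)) + x (Fin.last m) * y (Fin.last m) := by
    intro x y
    rw [show ⟪x, y⟫_ℝ = ∑ i, x i * y i by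
      simp [PiLp.inner_apply, RCLike.inner_apply, conj_trivial, mul_comm]]
    exact Fin.sum_univ_castSucc (fun i => x i * y i)
  set bvec : EuclideanSpace ℝ (Fin (m+1)) := WithLp.toLp 2 (Fin.snoc a b : Fin (m+1) → ℝ) with hbvec
  have hbK : bvec ∈ K := by
    by_contra hnmem
    obtain ⟨y, hy1, hy2⟩ : ∃ y, (∀ x ∈ K, 0 ≤ ⟪x, y⟫_ℝ) ∧ ⟪y, bvec⟫_ℝ < 0 := by
      obtain ⟨y, h1, h2⟩ := ProperCone.hyperplane_separation' (x₀ := bvec)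
        ({ carrier := (K : Set (EuclideanSpace ℝ (Fin (m+1)))),
           add_mem' := fun ha hb => K.add_mem ha hb,
           zero_mem' := ⟨0, fun i => le_rfl, by simp⟩,
           smul_mem' := fun r x hx => by
             obtain ⟨cf, hcf, rfl⟩ := hx
             exact ⟨fun i => (r:ℝ) * cf i, fun i => mul_nonneg r.2 (hcf i), by
               rw [Finset.smul_sum]
               exact Finset.sum_congr rfl fun i _ => (smul_smul (r:ℝ) (cf i) (w i))⟩,
           isClosed' := hKcl } : ProperCone ℝ (EuclideanSpace ℝ (Fin (m+1)))) (by exact hnmem)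
      exact ⟨y, h1, by rwa [real_inner_comm]⟩
    set u : Fin m → ℝ := fun j => y (Fin.castSucc j) with hu
    set r : ℝ := y (Fin.last m) with hr
    have hrow : ∀ i, 0 ≤ (∑ j, A i j * u j) + c i * r := by
      intro i
      have h := hy1 _ (hgen (Sum.inl i))
      rw [hinner] at h
      simpa [hw, hu, hr, Fin.snoc_castSucc, Fin.snoc_last] using h
    have hrnn : 0 ≤ r := by
      have := hy1 _ (hgen (Sum.inr ()))
      rw [hinner] at this
      simpa [hw, hu, hr, Fin.snoc_castSucc, Fin.snoc_last] using this
    have hyb : (∑ j, a j * u j) + b * r < 0 := by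
      have := hy2
      rw [real_inner_comm, hinner] at this
      simpa [hbvec, hu, hr, Fin.snoc_castSucc, Fin.snoc_last] using this
    rcases eq_or_lt_of_le hrnn with hr0 | hrpos
    · -- r = 0
      have hAu : ∀ i, 0 ≤ ∑ j, A i j * u j := by
        intro i; have h := hrow i; rw [← hr0] at h; simpa using h
      have hau : (∑ j, a j * u j) < 0 := by
        have h := hyb; rw [← hr0] at h; simpa using h
      have hspos : (0:ℝ) < -(∑ j, a j * u j) := by linarith
      have hb0 : a ⬝ᵥ x0 ≤ b := hval x0 hx0
      set lam : ℝ := (b + 1 - a ⬝ᵥ x0) / (-(∑ j, a j * u j)) with hlam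
      have hlamnn : 0 ≤ lam := div_nonneg (by linarith) hspos.le
      have hfeas : A.mulVec (x0 - lam • u) ≤ c := by
        intro i
        rw [mulVec_sub_smul']
        have h1 := hx0 i
        have h2 := mul_nonneg hlamnn (hAu i)
        linarith
      have hx := hval _ hfeas
      rw [dot_sub_smul'] at hx
      have hls : lam * (∑ j, a j * u j) = -(b + 1 - a ⬝ᵥ x0) := by
        rw [hlam]
        rw [div_mul_eq_mul_div, div_eq_iff hspos.ne']
        ring
      linarith
    · -- r > 0
      have hfeas : A.mulVec (fun j => u j * (-r⁻¹)) ≤ c := by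
        intro i
        rw [mulVec_scaled]
        have h := hrow i
        have heq : (∑ j, A i j * u j) * (-r⁻¹) = -(∑ j, A i j * u j) / r := by
          field_simp
        rw [heq, div_le_iff₀ hrpos]
        nlinarith
      have hle := hval _ hfeas
      rw [dot_scaled] at hle
      have heq : (∑ j, a j * u j) * (-r⁻¹) = -(∑ j, a j * u j) / r := by
        field_simp
      rw [heq, div_le_iff₀ hrpos] at hle
      nlinarith
  -- extract the multipliers
  obtain ⟨cf, hcf, hsum⟩ := hbK
  refine ⟨fun i => cf (Sum.inl i), fun i => hcf _, ?_, ?_⟩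
  · intro j
    have happ : bvec (Fin.castSucc j) = ∑ i, cf i * w i (Fin.castSucc j) := by
      rw [hsum]
      simp [WithLp.ofLp_sum, Finset.sum_apply]
    rw [hbvec] at happ
    simp only [Fin.snoc_castSucc] at happ
    rw [Fintype.sum_sum_type] at happ
    simp only [hw, Sum.elim_inl, Sum.elim_inr, Fin.snoc_castSucc] at happ
    rw [happ]
    simp [mul_comm]
  · have happ : bvec (Fin.last m) = ∑ i, cf i * w i (Fin.last m) := by
      rw [hsum]
      simp [WithLp.ofLp_sum, Finset.sum_apply]
    rw [hbvec] at happ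
    simp only [Fin.snoc_last] at happ
    rw [Fintype.sum_sum_type] at happ
    simp only [hw, Sum.elim_inl, Sum.elim_inr, Fin.snoc_last] at happ
    have : (0:ℝ) ≤ cf (Sum.inr ()) := hcf _
    rw [dotProduct]
    simp only [mul_one] at happ
    rw [happ]
    have : ∑ i : Unit, cf (Sum.inr i) = cf (Sum.inr ()) := by simp
    rw [this]
    have h0 : (0:ℝ) ≤ cf (Sum.inr ()) := hcf _
    linarith [le_refl (∑ i, cf (Sum.inl i) * c i)]


/-- Feasibility characterization underlying Theorem 1 (outer approximation):
for `P₀ = {U | F U ≤ H}` and nonempty `P = {U | F' U ≤ H'}`, a scalar `β > 0` and a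
vector `t`, the inclusion `P ⊆ β P₀ + t` holds iff there exists a nonnegative matrix
`G` with `G F' = F` and `G H' ≤ β H + F t`. -/
theorem superset_homothet_iff_nonneg_multiplier
    (p q m : ℕ) (F : Matrix (Fin p) (Fin m) ℝ) (H : Fin p → ℝ)
    (F' : Matrix (Fin q) (Fin m) ℝ) (H' : Fin q → ℝ)
    (hne : ({U : Fin m → ℝ | F'.mulVec U ≤ H'}).Nonempty)
    (β : ℝ) (hβ : 0 < β) (t : Fin m → ℝ) :
    ({U : Fin m → ℝ | F'.mulVec U ≤ H'}
        ⊆ (fun ξ => β • ξ + t) '' {U : Fin m → ℝ | F.mulVec U ≤ H}) ↔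
      ∃ G : Matrix (Fin p) (Fin q) ℝ,
        (∀ i j, 0 ≤ G i j) ∧ G * F' = F ∧ G.mulVec H' ≤ β • H + F.mulVec t := by
  obtain ⟨x0, hx0⟩ := hne
  constructor
  · intro hsub
    have hrow : ∀ i : Fin p, ∃ y : Fin q → ℝ, (∀ k, 0 ≤ y k) ∧
        (∀ j, ∑ k, y k * F' k j = F i j) ∧ y ⬝ᵥ H' ≤ β * H i + F.mulVec t i := by
      intro i
      apply farkas_ineq F' H' x0 hx0 (F i) (β * H i + F.mulVec t i)
      intro x hx
      obtain ⟨ξ, hξ, hξx⟩ := hsub hx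
      have : F.mulVec x i = β * F.mulVec ξ i + F.mulVec t i := by
        rw [← hξx, Matrix.mulVec_add, Matrix.mulVec_smul]
        simp
      have hF : F i ⬝ᵥ x = F.mulVec x i := rfl
      rw [hF, this]
      have := hξ i
      nlinarith
    choose y hy1 hy2 hy3 using hrow
    refine ⟨Matrix.of y, fun i j => hy1 i j, ?_, ?_⟩
    · ext i j
      rw [Matrix.mul_apply]
      exact hy2 i j
    · intro i
      have : (Matrix.of y).mulVec H' i = y i ⬝ᵥ H' := rfl
      rw [this]
      simpa using hy3 i
  · rintro ⟨G, hG, hGF, hGH⟩ U hU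
    refine ⟨β⁻¹ • (U - t), ?_, ?_⟩
    · intro i
      have hFU : F.mulVec U i ≤ β * H i + F.mulVec t i := by
        have h1 : F.mulVec U = G.mulVec (F'.mulVec U) := by
          rw [← hGF, ← Matrix.mulVec_mulVec]
        have h2 : G.mulVec (F'.mulVec U) i ≤ G.mulVec H' i := by
          show ∑ k, G i k * F'.mulVec U k ≤ ∑ k, G i k * H' k
          apply Finset.sum_le_sum
          intro k _
          exact mul_le_mul_of_nonneg_left (hU k) (hG i k)
        have h3 := hGH i
        simp only [Pi.add_apply, Pi.smul_apply, smul_eq_mul] at h3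
        rw [h1]
        linarith
      have hFξ : F.mulVec (β⁻¹ • (U - t)) i
          = β⁻¹ * (F.mulVec U i - F.mulVec t i) := by
        rw [Matrix.mulVec_smul, Matrix.mulVec_sub]
        simp
      rw [Set.mem_setOf_eq] at *
      show F.mulVec (β⁻¹ • (U - t)) i ≤ H i
      rw [hFξ]
      rw [inv_mul_le_iff₀ hβ]
      linarith
    · show β • (β⁻¹ • (U - t)) + t = U
      rw [smul_smul, mul_inv_cancel₀ hβ.ne', one_smul, sub_add_cancel]
end

section
/- Let B₀ ⊆ ℝ^m be a set, and for i = 1, …, N let P^i ⊆ ℝ^m, β^i > 0, and t^i ∈ ℝ^m be such that β^i B₀ + t^i ⊆ P^i. Set β = Σ_{i=1}^N β^i and t = Σ_{i=1}^N t^i. Then for every U ∈ β B₀ + t, the vectors U^i := (β^i/β)(U − t) + t^i satisfy U^i ∈ P^i for every i, and Σ_{i=1}^N U^i = U. That is, every point of the homothet β B₀ + t admits an explicit decomposition into admissible individual components. -/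
/-- Power-profile decomposition (equation (13) of Theorem 2): if `βⁱ B₀ + tⁱ ⊆ Pⁱ`
with `βⁱ > 0` for `i = 1, …, N`, `β = Σᵢ βⁱ`, `t = Σᵢ tⁱ`, then every
`U ∈ β B₀ + t` decomposes as `U = Σᵢ Uⁱ` with `Uⁱ = (βⁱ/β)(U - t) + tⁱ ∈ Pⁱ`. -/
theorem homothet_member_decomposition
    (m N : ℕ) (hN : 0 < N) (B₀ : Set (Fin m → ℝ))
    (P : Fin N → Set (Fin m → ℝ)) (β : Fin N → ℝ) (t : Fin N → Fin m → ℝ)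
    (hβ : ∀ i, 0 < β i)
    (h : ∀ i, (fun ξ => β i • ξ + t i) '' B₀ ⊆ P i)
    (U : Fin m → ℝ)
    (hU : U ∈ (fun ξ => (∑ i, β i) • ξ + ∑ i, t i) '' B₀) :
    (∀ i, (β i / ∑ j, β j) • (U - ∑ j, t j) + t i ∈ P i) ∧
      ∑ i, ((β i / ∑ j, β j) • (U - ∑ j, t j) + t i) = U := by
  obtain ⟨ξ, hξ, hξU⟩ := hU
  have hs : (0 : ℝ) < ∑ j, β j := Finset.sum_pos (fun j _ => hβ j) ⟨⟨0, hN⟩, Finset.mem_univ _⟩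
  have key : ∀ i, (β i / ∑ j, β j) • (U - ∑ j, t j) + t i = β i • ξ + t i := by
    intro i
    have : U - ∑ j, t j = (∑ j, β j) • ξ := by
      simp only [← hξU]; abel
    rw [this, smul_smul, div_mul_cancel₀ _ hs.ne']
  constructor
  · intro i
    rw [key i]
    exact h i ⟨ξ, hξ, rfl⟩
  · simp only [key]
    rw [Finset.sum_add_distrib, ← Finset.sum_smul, ← hξU]
end

section
/- Let X₀ ⊆ ℝ^m be a convex set. For i = 1, …, N let X^i ⊆ ℝ^m, β^i > 0, and t^i ∈ ℝ^m satisfy β^i X₀ + t^i ⊆ X^i, and let U^i = {U ∈ ℝ^m : −u^i ≤ U ≤ ū^i} with u^i, ū^i ∈ ℝ^m (inequalities entrywise). Define u, ū ∈ ℝ^m componentwise by u(k) = min_i (u^i(k) + t^i(k))/β^i and ū(k) = min_i (ū^i(k) − t^i(k))/β^i, and set U₀ = {U ∈ ℝ^m : −u ≤ U ≤ ū}, β = Σ_{i=1}^N β^i, t = Σ_{i=1}^N t^i. Then β (X₀ ∩ U₀) + t ⊆ Σ_{i=1}^N (X^i ∩ U^i), where the right-hand side is the Minkowski sum of the sets X^i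 ∩ U^i. -/
open Pointwise

lemma mem_finset_sum_sets {ι α : Type*} [AddCommMonoid α] (s : Finset ι)
    (S : ι → Set α) (a : ι → α) (h : ∀ i ∈ s, a i ∈ S i) :
    (∑ i ∈ s, a i) ∈ ∑ i ∈ s, S i := by
  classical
  induction s using Finset.induction with
  | empty => simp
  | @insert j s' hi ih =>
    rw [Finset.sum_insert hi, Finset.sum_insert hi]
    exact Set.add_mem_add (h j (Finset.mem_insert_self _ _))
      (ih fun i hi' => h i (Finset.mem_insert_of_mem hi'))

/-- Theorem 3 of the paper (suboptimal sufficient virtual battery): if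
`βⁱ X₀ + tⁱ ⊆ Xⁱ` with `X₀` convex and `βⁱ > 0`, `Uⁱ = {U | -uⁱ ≤ U ≤ ūⁱ}`, and
`U₀ = {U | -u ≤ U ≤ ū}` with `u(k) = minᵢ (uⁱ(k)+tⁱ(k))/βⁱ`,
`ū(k) = minᵢ (ūⁱ(k)-tⁱ(k))/βⁱ`, then `β (X₀ ∩ U₀) + t ⊆ Σᵢ (Xⁱ ∩ Uⁱ)`, where
`β = Σᵢ βⁱ`, `t = Σᵢ tⁱ`, and the right-hand side is a Minkowski sum. -/
theorem suboptimal_sufficient_battery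
    (m N : ℕ) (hN : 0 < N) (X₀ : Set (Fin m → ℝ)) (hX₀ : Convex ℝ X₀)
    (X : Fin N → Set (Fin m → ℝ)) (β : Fin N → ℝ) (t : Fin N → Fin m → ℝ)
    (hβ : ∀ i, 0 < β i)
    (hX : ∀ i, (fun ξ => β i • ξ + t i) '' X₀ ⊆ X i)
    (ulo uhi : Fin N → Fin m → ℝ) :
    (fun ξ => (∑ i, β i) • ξ + ∑ i, t i) ''
        (X₀ ∩ {U : Fin m → ℝ |
          (fun k => -⨅ i, (ulo i k + t i k) / β i) ≤ U ∧
          U ≤ fun k => ⨅ i, (uhi i k - t i k) / β i})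
      ⊆ ∑ i, (X i ∩ {U : Fin m → ℝ | -ulo i ≤ U ∧ U ≤ uhi i}) := by
  rintro _ ⟨ξ, ⟨hξX, hlo, hhi⟩, rfl⟩
  have key : (∑ i, β i) • ξ + ∑ i, t i = ∑ i, (β i • ξ + t i) := by
    rw [Finset.sum_add_distrib, Finset.sum_smul]
  show (∑ i, β i) • ξ + ∑ i, t i ∈ _
  rw [key]
  apply mem_finset_sum_sets
  intro i _
  refine ⟨hX i ⟨ξ, hξX, rfl⟩, ?_, ?_⟩
  · intro k
    have h1 : -((ulo i k + t i k) / β i) ≤ ξ k := by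
      have := hlo k
      simp only [neg_le] at this ⊢
      calc (ulo i k + t i k) / β i ≥ ⨅ j, (ulo j k + t j k) / β j :=
            ciInf_le (Set.Finite.bddBelow (Set.finite_range _)) i
        _ ≥ -ξ k := this
    have hb := (hβ i).le
    simp only [Pi.neg_apply, Pi.add_apply, Pi.smul_apply, smul_eq_mul]
    have h2 := (le_div_iff₀ (hβ i)).mp (neg_le.mp h1)
    nlinarith [hβ i]
  · intro k
    have h1 : ξ k ≤ (uhi i k - t i k) / β i :=
      le_trans (hhi k) (ciInf_le (Set.Finite.bddBelow (Set.finite_range _)) i)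
    have := (le_div_iff₀ (hβ i)).mp h1
    simp only [Pi.add_apply, Pi.smul_apply, smul_eq_mul]
    linarith
end
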